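/- Let F be the free group on generators x₁, …, x_m with m ≥ 2, and fix distinct indices i ≠ j. Let ψ_i : F → ℤ/2ℤ be the homomorphism with ψ_i(x_i) = 1 and ψ_i(x_k) = 0 for k ≠ i, let G_i = ker ψ_i, and let H_i ≤ G_i be the subgroup generated by all commutators [a, b] with a, b ∈ G_i together with all squares a² with a ∈ G_i (the kernel of G_i → G_i^{ab} ⊗ 𝔽₂). Then the commutator [x_i, x_j] = x_i x_j x_i⁻¹ x_j⁻¹ lies in G_i but does not lie in H_i; equivalently, the image of [x_i, x_j] in G_i^{ab} ⊗ 𝔽₂ is nonzero. -/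

import Mathlib

open scoped commutatorElement

/-- Auxiliary group: `(ℤ/2 × ℤ/2) ⋊ ℤ/2`, with ℤ/2 acting by swapping coordinates. -/
structure KGrp where
  v : ZMod 2 × ZMod 2
  s : ZMod 2
  deriving DecidableEq, Fintype

namespace KGrp

def sw (s : ZMod 2) (v : ZMod 2 × ZMod 2) : ZMod 2 × ZMod 2 :=
  if s = 0 then v else (v.2, v.1)

instance : Group KGrp where
  mul g h := ⟨g.v + sw g.s h.v, g.s + h.s⟩
  one := ⟨0, 0⟩
  inv g := ⟨sw g.s g.v, g.s⟩
  mul_assoc := by decide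
  one_mul := by decide
  mul_one := by decide
  inv_mul_cancel := by decide

lemma mul_def (g h : KGrp) : g * h = ⟨g.v + sw g.s h.v, g.s + h.s⟩ := rfl

lemma one_def : (1 : KGrp) = ⟨0, 0⟩ := rfl

/-- Projection to the acting `ℤ/2`. -/
def π : KGrp →* Multiplicative (ZMod 2) where
  toFun g := Multiplicative.ofAdd g.s
  map_one' := rfl
  map_mul' g h := ofAdd_add g.s h.s

lemma comm_of_s_eq_zero (g h : KGrp) (hg : g.s = 0) (hh : h.s = 0) :
    g * h * g⁻¹ * h⁻¹ = 1 := by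
  revert hg hh; revert g h; decide

lemma sq_of_s_eq_zero (g : KGrp) (hg : g.s = 0) : g * g = 1 := by
  revert hg; revert g; decide

end KGrp

/-- Let `F` be the free group on `m ≥ 2` generators, `ψᵢ : F → ℤ/2` the homomorphism
sending `xᵢ` to `1` and the other generators to `0`, `Gᵢ = ker ψᵢ`, and `Hᵢ` the
subgroup generated by the commutators and squares of elements of `Gᵢ` (the kernel
of the mod-2 abelianization of `Gᵢ`). For `j ≠ i`, the commutator `⁅xᵢ, xⱼ⁆` lies
in `Gᵢ` but not in `Hᵢ`. -/
theorem commutator_mem_ker_not_mem_mod_two_abelianization_kernel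
    (m : ℕ) (hm : 2 ≤ m) (i j : Fin m) (hij : i ≠ j)
    (ψ : FreeGroup (Fin m) →* Multiplicative (ZMod 2))
    (hψ : ∀ l : Fin m, ψ (FreeGroup.of l) =
      Multiplicative.ofAdd (if l = i then 1 else 0)) :
    ⁅FreeGroup.of i, FreeGroup.of j⁆ ∈ ψ.ker ∧
      ⁅FreeGroup.of i, FreeGroup.of j⁆ ∉
        Subgroup.closure {x : FreeGroup (Fin m) |
          (∃ a ∈ ψ.ker, ∃ b ∈ ψ.ker, x = ⁅a, b⁆) ∨ ∃ a ∈ ψ.ker, x = a ^ 2} := by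
  constructor
  · rw [MonoidHom.mem_ker, map_commutatorElement]
    exact commutatorElement_eq_one_iff_commute.mpr (mul_comm _ _)
  · -- build ρ : F → KGrp
    set f : Fin m → KGrp := fun k =>
      if k = i then ⟨0, 1⟩ else if k = j then ⟨(1, 0), 0⟩ else 1 with hf
    set ρ : FreeGroup (Fin m) →* KGrp := FreeGroup.lift f with hρ
    have hπρ : KGrp.π.comp ρ = ψ := by
      apply FreeGroup.ext_hom
      intro k
      simp only [MonoidHom.comp_apply, hρ, FreeGroup.lift_apply_of, hf, hψ]
      by_cases hk : k = i
      · simp [hk, KGrp.π]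
      · by_cases hk' : k = j <;> simp [hk, hk', KGrp.π, KGrp.one_def, Ne.symm hij]
    have hs : ∀ a : FreeGroup (Fin m), a ∈ ψ.ker → (ρ a).s = 0 := by
      intro a ha
      rw [MonoidHom.mem_ker] at ha
      have : KGrp.π (ρ a) = 1 := by
        rw [← MonoidHom.comp_apply, hπρ, ha]
      have h2 : Multiplicative.toAdd (KGrp.π (ρ a)) = 0 := by rw [this]; rfl
      exact h2
    have hker : Subgroup.closure {x : FreeGroup (Fin m) |
          (∃ a ∈ ψ.ker, ∃ b ∈ ψ.ker, x = ⁅a, b⁆) ∨ ∃ a ∈ ψ.ker, x = a ^ 2}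
        ≤ ρ.ker := by
      rw [Subgroup.closure_le]
      rintro x (⟨a, ha, b, hb, rfl⟩ | ⟨a, ha, rfl⟩)
      · simp only [SetLike.mem_coe, MonoidHom.mem_ker, commutatorElement_def,
          map_mul, map_inv]
        exact KGrp.comm_of_s_eq_zero (ρ a) (ρ b) (hs a ha) (hs b hb)
      · rw [SetLike.mem_coe, MonoidHom.mem_ker, sq, map_mul]
        exact KGrp.sq_of_s_eq_zero (ρ a) (hs a ha)
    intro hmem
    have : ρ ⁅FreeGroup.of i, FreeGroup.of j⁆ = 1 := hker hmem
    have hfi : f i = ⟨0, 1⟩ := by simp [hf]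
    have hfj : f j = ⟨(1, 0), 0⟩ := by simp [hf, Ne.symm hij]
    rw [map_commutatorElement, hρ, FreeGroup.lift_apply_of, FreeGroup.lift_apply_of, hfi, hfj] at this
    exact absurd this (by decide)
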